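/- arXiv:0805.4654 — 6 statements merged into one kernel-verified Lean document; each statement's English description precedes it below -/
import Mathlib

section
/- Let X be a finite set, let n ≥ 1, and let f_1,…,f_n : X → X be functions. Suppose there exists a positive integer N such that every N-fold composition f_{i_1} ∘ ⋯ ∘ f_{i_N} of members of the family has a range consisting of a single element. Then there exists a partial order ≤ on the cartesian product X × X such that: (i) each diagonal element (x,x) is a minimal element; (ii) each pair (x,y) ∈ X × X has some diagonal element (z,z) with (z,z) ≤ (x,y); and (iii) for every i ∈ {1,…,n} and every pair (x,y) with x ≠ y, one has (f_i(x), f_i(y)) ≤ (x,y). -/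
theorem stmt_1 {X : Type*} [Finite X] {n : ℕ} (hn : 1 ≤ n) (f : Fin n → X → X)
    (h : ∃ N : ℕ, 0 < N ∧ ∀ l : List (Fin n), l.length = N →
      ∃ c : X, ∀ x : X, l.foldr (fun i g => f i ∘ g) id x = c) :
    ∃ le : X × X → X × X → Prop, IsPartialOrder (X × X) le ∧
      (∀ (x : X) (p : X × X), le p (x, x) → p = (x, x)) ∧
      (∀ p : X × X, ∃ z : X, le (z, z) p) ∧
      (∀ (i : Fin n) (x y : X), x ≠ y → le (f i x, f i y) (x, y)) := by
  classical
  obtain ⟨N, hN, hconst⟩ := h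
  set F : List (Fin n) → X → X := fun l => l.foldr (fun i g => f i ∘ g) id with hF
  have Fapp : ∀ l m : List (Fin n), ∀ x, F (l ++ m) x = F l (F m x) := by
    intro l m x
    induction l with
    | nil => rfl
    | cons a l ih => simp only [List.cons_append, hF, List.foldr_cons, Function.comp_apply] at *
                     rw [ih]
  have hconst' : ∀ l : List (Fin n), N ≤ l.length → ∃ c, ∀ x, F l x = c := by
    intro l hl
    obtain ⟨c, hc⟩ := hconst (l.take N) (by rw [List.length_take]; omega)
    refine ⟨c, fun x => ?_⟩
    conv_lhs => rw [show l = l.take N ++ l.drop N from (List.take_append_drop N l).symm]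
    rw [Fapp]; exact hc _
  have hfix : ∀ (w : List (Fin n)) (a : X), F w a = a →
      ∀ k : ℕ, F ((List.replicate k w).flatten) a = a := by
    intro w a ha k
    induction k with
    | zero => rfl
    | succ k ih =>
      rw [List.replicate_succ]
      show F (w ++ (List.replicate k w).flatten) a = a
      rw [Fapp, ih, ha]
  refine ⟨fun q p => q = p ∨ (p.1 ≠ p.2 ∧ ∃ l : List (Fin n), (F l p.1, F l p.2) = q),
    { refl := fun a => Or.inl rfl, trans := ?_, antisymm := ?_ }, ?_, ?_, ?_⟩
  · -- trans
    rintro a b c (rfl | ⟨hb, l, rfl⟩) hbc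
    · exact hbc
    rcases hbc with rfl | ⟨hc, m, rfl⟩
    · exact Or.inr ⟨hb, l, rfl⟩
    · exact Or.inr ⟨hc, l ++ m, by rw [Fapp, Fapp]⟩
  · -- antisymm
    rintro a b (rfl | ⟨hb, l, rfl⟩) hba
    · rfl
    rcases hba with h' | ⟨ha, m, hm⟩
    · exact h'.symm
    · set w := m ++ l with hwdef
      have h1 : F w b.1 = b.1 := by rw [hwdef, Fapp]; exact congrArg Prod.fst hm
      have h2 : F w b.2 = b.2 := by rw [hwdef, Fapp]; exact congrArg Prod.snd hm
      rcases eq_or_ne w []  with hw | hw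
      · obtain ⟨hm0, hl0⟩ := List.append_eq_nil_iff.mp (hwdef ▸ hw)
        subst hl0
        exact Prod.ext rfl rfl
      · exfalso
        have hlen' : ((List.replicate N w).flatten).length = N * w.length := by
          simp [List.length_flatten, List.map_replicate, List.sum_replicate, smul_eq_mul]
        obtain ⟨c, hc⟩ := hconst' ((List.replicate N w).flatten)
          (by rw [hlen']; exact Nat.le_mul_of_pos_right N (List.length_pos_iff.mpr hw))
        have e1 := hfix w b.1 h1 N
        have e2 := hfix w b.2 h2 N
        rw [hc] at e1 e2
        exact hb (by rw [← e1, ← e2])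
  · -- minimality of diagonal
    rintro x p (rfl | ⟨hxx, -⟩)
    · rfl
    · exact absurd rfl hxx
  · -- diagonal below
    intro p
    by_cases hp : p.1 = p.2
    · exact ⟨p.1, Or.inl (Prod.ext rfl hp)⟩
    · obtain ⟨c, hc⟩ := hconst (List.replicate N ⟨0, hn⟩) (by simp)
      exact ⟨c, Or.inr ⟨hp, List.replicate N ⟨0, hn⟩, by rw [show F = fun l => l.foldr (fun i g => f i ∘ g) id from rfl]; simp only; rw [hc, hc]⟩⟩
  · -- f i decreases
    intro i x y hxy
    exact Or.inr ⟨hxy, [i], rfl⟩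
end

section
/- Let X be a finite set, let n ≥ 1, and let f_1,…,f_n : X → X be functions. Define subsets Σ_m ⊆ X × X inductively by Σ_0 = {(x,x) : x ∈ X} and Σ_{m+1} = Σ_m ∪ {(x,y) ∈ X × X : (f_i(x), f_i(y)) ∈ Σ_m for all i = 1,…,n}. Then the following are equivalent: (a) there exists a positive integer N such that every N-fold composition f_{i_1} ∘ ⋯ ∘ f_{i_N} (arbitrary indices i_t ∈ {1,…,n}) has a range consisting of a single element; (b) ∪_{m≥0} Σ_m = X × X. -/
def SigmaSet {X : Type*} {n : ℕ} (f : Fin n → X → X) : ℕ → Set (X × X)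
  | 0 => {p | p.1 = p.2}
  | m + 1 => SigmaSet f m ∪ {p | ∀ i, (f i p.1, f i p.2) ∈ SigmaSet f m}

namespace StmtAux

variable {X : Type*} {n : ℕ} (f : Fin n → X → X)

def word (l : List (Fin n)) : X → X := l.foldr (fun i g => f i ∘ g) id

lemma foldr_comp (l : List (Fin n)) (h : X → X) :
    l.foldr (fun i g => f i ∘ g) h = (word f l) ∘ h := by
  induction l with
  | nil => rfl
  | cons i t ih =>
      show f i ∘ (t.foldr (fun i g => f i ∘ g) h) = _
      rw [ih]; rfl

lemma word_append (l : List (Fin n)) (i : Fin n) (x : X) :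
    word f (l ++ [i]) x = word f l (f i x) := by
  unfold word
  rw [List.foldr_append]
  show l.foldr (fun i g => f i ∘ g) (f i ∘ id) x = _
  rw [foldr_comp]; rfl

lemma mem_sigma_iff (m : ℕ) (x y : X) :
    (x, y) ∈ SigmaSet f m ↔
      ∀ l : List (Fin n), l.length = m → word f l x = word f l y := by
  induction m generalizing x y with
  | zero =>
      constructor
      · intro h l hl
        have : l = [] := List.length_eq_zero_iff.mp hl
        subst this; exact h
      · intro h
        have := h [] rfl
        exact this
  | succ m ih =>
      constructor
      · rintro (h | h) l hl
        · rcases l with _ | ⟨i, t⟩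
          · simp at hl
          · have ht : t.length = m := by simpa using hl
            show f i (word f t x) = f i (word f t y)
            rw [(ih x y).mp h t ht]
        · rcases List.eq_nil_or_concat l with rfl | ⟨t, i, rfl⟩
          · simp at hl
          · have ht : t.length = m := by simpa using hl
            rw [List.concat_eq_append, word_append, word_append]
            exact (ih (f i x) (f i y)).mp (h i) t ht
      · intro h
        right
        intro i
        rw [ih]
        intro t ht
        have := h (t ++ [i]) (by simp [ht])
        rwa [word_append, word_append] at this

lemma sigma_mono : Monotone (SigmaSet f) := by
  apply monotone_nat_of_le_succ
  intro m
  exact Set.subset_union_left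

end StmtAux

theorem stmt_2 {X : Type*} [Finite X] [Nonempty X] {n : ℕ} (hn : 1 ≤ n)
    (f : Fin n → X → X) :
    (∃ N : ℕ, 0 < N ∧ ∀ l : List (Fin n), l.length = N →
      ∃ c : X, ∀ x : X, l.foldr (fun i g => f i ∘ g) id x = c) ↔
    (⋃ m, SigmaSet f m) = Set.univ := by
  classical
  constructor
  · rintro ⟨N, -, hconst⟩
    rw [Set.eq_univ_iff_forall]
    rintro ⟨x, y⟩
    rw [Set.mem_iUnion]
    refine ⟨N, (StmtAux.mem_sigma_iff f N x y).mpr ?_⟩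
    intro l hl
    obtain ⟨c, hc⟩ := hconst l hl
    exact (hc x).trans (hc y).symm
  · intro h
    haveI : Fintype (X × X) := Fintype.ofFinite _
    have hp : ∀ p : X × X, ∃ m, p ∈ SigmaSet f m := by
      intro p
      have := h ▸ Set.mem_univ p
      exact Set.mem_iUnion.mp this
    set N' : ℕ := Finset.univ.sup (fun p : X × X => Nat.find (hp p)) with hN'
    refine ⟨N' + 1, Nat.succ_pos _, ?_⟩
    intro l hl
    have x0 : X := Classical.arbitrary X
    refine ⟨StmtAux.word f l x0, ?_⟩
    intro x
    have hle : Nat.find (hp (x, x0)) ≤ N' :=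
      Finset.le_sup (f := fun p : X × X => Nat.find (hp p)) (Finset.mem_univ (x, x0))
    have hmem : (x, x0) ∈ SigmaSet f (N' + 1) :=
      StmtAux.sigma_mono f (le_trans hle (Nat.le_succ N')) (Nat.find_spec (hp (x, x0)))
    exact (StmtAux.mem_sigma_iff f (N' + 1) x x0).mp hmem l hl
end

section
/- Let Y be a finite set with a distinguished element †, let N ≥ 1, and let g_1,…,g_N : Y → Y be functions each satisfying g_j(†) = †. Suppose there exists a positive integer M such that every M-fold composition g_{j_1} ∘ ⋯ ∘ g_{j_M} (arbitrary indices j_t ∈ {1,…,N}) has range equal to the single element set {†}. Then there exists a partial order ≤ on Y such that: (i) the only minimal element of (Y, ≤) is †; and (ii) g_j(y) ≤ y for every j ∈ {1,…,N} and every y ∈ Y. -/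
theorem stmt_3 {Y : Type*} [Finite Y] (dag : Y) {N : ℕ} (hN : 1 ≤ N)
    (g : Fin N → Y → Y) (hg : ∀ j, g j dag = dag)
    (h : ∃ M : ℕ, 0 < M ∧ ∀ l : List (Fin N), l.length = M →
      ∀ y : Y, l.foldr (fun j G => g j ∘ G) id y = dag) :
    ∃ le : Y → Y → Prop, IsPartialOrder Y le ∧
      (∀ y : Y, (∀ z, le z y → z = y) ↔ y = dag) ∧
      (∀ (j : Fin N) (y : Y), le (g j y) y) := by
  obtain ⟨M, hM, hMall⟩ := h
  set F : List (Fin N) → Y → Y := fun l => l.foldr (fun j G => g j ∘ G) id with hF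
  have Fcons : ∀ (j : Fin N) (l : List (Fin N)) (y : Y),
      F (j :: l) y = g j (F l y) := by intro j l y; rfl
  have Fappend : ∀ (l₁ l₂ : List (Fin N)) (y : Y),
      F (l₁ ++ l₂) y = F l₁ (F l₂ y) := by
    intro l₁ l₂ y
    induction l₁ with
    | nil => rfl
    | cons j t ih => simp [Fcons, ih]
  have Fdag : ∀ l : List (Fin N), F l dag = dag := by
    intro l
    induction l with
    | nil => rfl
    | cons j t ih => simp [Fcons, ih, hg]
  set r : Y → Y → Prop := fun a b => ∃ j, a = g j b with hr
  set le : Y → Y → Prop := Relation.ReflTransGen r with hle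
  have reach : ∀ {z y : Y}, le z y → ∃ l : List (Fin N), F l y = z := by
    intro z y hzy
    induction hzy using Relation.ReflTransGen.head_induction_on with
    | refl => exact ⟨[], rfl⟩
    | head hab _ ih =>
      obtain ⟨l, hl⟩ := ih
      obtain ⟨j, hj⟩ := hab
      exact ⟨j :: l, by rw [Fcons, hl, hj]⟩
  have le_F : ∀ (l : List (Fin N)) (y : Y), le (F l y) y := by
    intro l y
    induction l with
    | nil => exact Relation.ReflTransGen.refl
    | cons j t ih =>
      exact Relation.ReflTransGen.head ⟨j, by rw [Fcons]⟩ ih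
  have cycle_dag : ∀ (l : List (Fin N)) (x : Y), l ≠ [] → F l x = x → x = dag := by
    intro l x hne hfix
    set c : List (Fin N) := List.flatten (List.replicate M l) with hc
    have hclen : c.length = M * l.length := by simp [hc]
    have hrep : ∀ n : ℕ, F (List.flatten (List.replicate n l)) x = x := by
      intro n
      induction n with
      | zero => rfl
      | succ m ih =>
        rw [List.replicate_succ, List.flatten_cons, Fappend, ih, hfix]
    have hcfix : F c x = x := hrep M
    have hlen1 : 1 ≤ l.length := by
      cases l with
      | nil => exact absurd rfl hne
      | cons a t => simp
    have hMle : M ≤ c.length := by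
      rw [hclen]
      calc M = M * 1 := by ring
        _ ≤ M * l.length := Nat.mul_le_mul_left M hlen1
    have hsplit : c = List.take (c.length - M) c ++ List.drop (c.length - M) c :=
      (List.take_append_drop _ _).symm
    have hdroplen : (List.drop (c.length - M) c).length = M := by
      simp [Nat.sub_sub_self hMle]
    have h2 : F (List.drop (c.length - M) c) x = dag := hMall _ hdroplen x
    have : F c x = dag := by
      rw [hsplit, Fappend, h2, Fdag]
    rw [hcfix] at this
    exact this
  have antis : ∀ a b : Y, le a b → le b a → a = b := by
    intro a b hab hba
    by_contra hne
    obtain ⟨l₁, hl₁⟩ := reach hab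
    obtain ⟨l₂, hl₂⟩ := reach hba
    have hfix : F (l₂ ++ l₁) b = b := by rw [Fappend, hl₁, hl₂]
    have hne2 : l₂ ++ l₁ ≠ [] := by
      intro hnil
      rcases List.append_eq_nil_iff.mp hnil with ⟨h2, h1⟩
      subst h1
      exact hne (hl₁.symm)
    have hb : b = dag := cycle_dag _ b hne2 hfix
    have ha : a = dag := by rw [← hl₁, hb, Fdag]
    exact hne (ha.trans hb.symm)
  refine ⟨le, ?_, ?_, ?_⟩
  · exact { refl := fun a => Relation.ReflTransGen.refl,
            trans := fun a b c hab hbc => hab.trans hbc,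
            antisymm := antis }
  · intro y
    constructor
    · intro hmin
      have hlen : (List.replicate M (⟨0, hN⟩ : Fin N)).length = M := by simp
      have hdy : F (List.replicate M (⟨0, hN⟩ : Fin N)) y = dag :=
        hMall _ hlen y
      have := hmin dag (hdy ▸ le_F (List.replicate M (⟨0, hN⟩ : Fin N)) y)
      exact this.symm
    · intro hy z hz
      obtain ⟨l, hl⟩ := reach hz
      rw [← hl, hy, Fdag]
  · intro j y
    exact Relation.ReflTransGen.single ⟨j, rfl⟩
end

section
/- Let n ≥ 2 and k ≥ 2. Let σ be a permutation of W_n^k and φ a permutation of W_n^{k-1}, and set τ = (id_1 × φ) ∘ σ ∘ (φ^{-1} × id_1), where id_1 × φ denotes the permutation of W_n^k fixing the first letter and applying φ to the last k−1 letters, and φ^{-1} × id_1 denotes the permutation of W_n^k applying φ^{-1} to the first k−1 letters and fixing the last letter. Then f_i^τ = φ ∘ f_i^σ ∘ φ^{-1} for every letter i ∈ {1,…,n}. -/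
/-- For a permutation `σ` of words of length `k+1` over the alphabet `Fin n`, and a letter `i`,
`fword σ i α` is the word `β` of length `k` such that `σ (β.m) = i.α` for some letter `m`,
i.e. the first `k` letters of `σ⁻¹ (i.α)`.  (The map `f_i^σ` of the paper.) -/
def fword {n k : ℕ} (σ : Equiv.Perm (Fin (k + 1) → Fin n)) (i : Fin n)
    (α : Fin k → Fin n) : Fin k → Fin n :=
  Fin.init (σ.symm (Fin.cons i α))

/-- Splitting a word of length `c = a + b` into its first `a` letters and last `b` letters. -/
def wordSplit (n a b c : ℕ) (h : a + b = c) :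
    (Fin c → Fin n) ≃ (Fin a → Fin n) × (Fin b → Fin n) :=
  (Equiv.arrowCongr (finCongr h.symm) (Equiv.refl (Fin n))).trans
    ((Equiv.arrowCongr finSumFinEquiv.symm (Equiv.refl (Fin n))).trans
      (Equiv.sumArrowEquivProdArrow _ _ _))

/-- The permutation `φ × ρ` of words of length `c = a + b`: `φ` acts on the first `a` letters
and `ρ` on the last `b` letters. -/
def prodPerm (n a b c : ℕ) (h : a + b = c) (φ : Equiv.Perm (Fin a → Fin n))
    (ρ : Equiv.Perm (Fin b → Fin n)) : Equiv.Perm (Fin c → Fin n) :=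
  ((wordSplit n a b c h).trans (φ.prodCongr ρ)).trans (wordSplit n a b c h).symm

lemma ws1 (n k : ℕ) (w : Fin (k+1) → Fin n) :
    (wordSplit n k 1 (k+1) rfl w).1 = Fin.init w := by
  funext j; simp [wordSplit, Fin.init, Fin.castSucc]

lemma ws2 (n k : ℕ) (pq : (Fin k → Fin n) × (Fin 1 → Fin n)) (j : Fin k) :
    (wordSplit n k 1 (k+1) rfl).symm pq j.castSucc = pq.1 j := by
  obtain ⟨p, q⟩ := pq
  simp [wordSplit, Fin.castSucc, finSumFinEquiv_symm_apply_castAdd]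

lemma ws3 (n k : ℕ) (i : Fin n) (α : Fin k → Fin n) :
    wordSplit n 1 k (k+1) (Nat.add_comm 1 k) (Fin.cons i α) = (fun _ => i, α) := by
  refine Prod.ext ?_ ?_ <;> funext x <;>
    simp [wordSplit, Equiv.sumArrowEquivProdArrow, finCongr, Fin.cast]
  rw [show (⟨1 + x.1, by omega⟩ : Fin (k+1)) = x.succ from Fin.ext (Nat.add_comm 1 x.1)]
  simp

/-- `τ = (id_1 × φ) ∘ σ ∘ (φ⁻¹ × id_1)` satisfies `f_i^τ = φ ∘ f_i^σ ∘ φ⁻¹`. -/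
theorem stmt_6 {n : ℕ} (hn : 2 ≤ n) {k : ℕ} (hk : 1 ≤ k)
    (σ : Equiv.Perm (Fin (k + 1) → Fin n)) (φ : Equiv.Perm (Fin k → Fin n)) :
    ∀ (i : Fin n) (α : Fin k → Fin n),
      fword (((prodPerm n k 1 (k + 1) rfl φ.symm (Equiv.refl _)).trans σ).trans
          (prodPerm n 1 k (k + 1) (Nat.add_comm 1 k) (Equiv.refl _) φ)) i α
        = φ (fword σ i (φ.symm α)) := by
  intro i α
  have h1 : (prodPerm n 1 k (k + 1) (Nat.add_comm 1 k) (Equiv.refl _) φ).symm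
      (Fin.cons i α) = Fin.cons i (φ.symm α) := by
    rw [Equiv.symm_apply_eq]
    simp only [prodPerm, Equiv.trans_apply, ws3]
    rw [Equiv.eq_symm_apply, ws3]
    simp
  have h2 : ∀ w : Fin (k+1) → Fin n,
      Fin.init ((prodPerm n k 1 (k+1) rfl φ.symm (Equiv.refl _)).symm w)
        = φ (Fin.init w) := by
    intro w
    funext j
    simp only [prodPerm, Equiv.symm_trans_apply, Equiv.symm_symm,
      Equiv.prodCongr_symm, Equiv.symm_symm, Equiv.trans_apply, Fin.init]
    rw [ws2]
    simp [ws1]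
  simp only [fword, Equiv.symm_trans_apply, h1, h2]
end

section
/- Let n ≥ 2 and k ≥ 2, and let σ be a permutation of W_n^k. Then the number of permutations τ of W_n^k such that f_i^τ = f_i^σ for all i ∈ {1,…,n} is exactly (n!)^{n^{k-1}}. -/
/-- Fiber-preserving permutations of a product correspond to families of permutations. -/
def fiberPerm {A B : Type*} :
    {π : Equiv.Perm (A × B) // ∀ p, (π p).1 = p.1} ≃ (A → Equiv.Perm B) where
  toFun π a :=
    { toFun := fun b => (π.1 (a, b)).2
      invFun := fun b => (π.1.symm (a, b)).2
      left_inv := by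
        intro b
        have h1 : (π.1 (a, b)).1 = a := π.2 (a, b)
        show (π.1.symm (a, (π.1 (a, b)).2)).2 = b
        rw [show (a, (π.1 (a, b)).2) = π.1 (a, b) from Prod.ext h1.symm rfl,
          Equiv.symm_apply_apply]
      right_inv := by
        intro b
        have h1 : (π.1.symm (a, b)).1 = a := by
          have := π.2 (π.1.symm (a, b))
          rw [Equiv.apply_symm_apply] at this
          exact this.symm
        show (π.1 (a, (π.1.symm (a, b)).2)).2 = b
        rw [show (a, (π.1.symm (a, b)).2) = π.1.symm (a, b) from Prod.ext h1.symm rfl,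
          Equiv.apply_symm_apply] }
  invFun f := ⟨Equiv.prodCongrRight f, fun _ => rfl⟩
  left_inv := by
    intro π
    apply Subtype.ext
    apply Equiv.ext
    intro p
    exact Prod.ext (π.2 p).symm rfl
  right_inv := by
    intro f
    funext a
    ext b
    rfl

theorem stmt_7 {n : ℕ} (hn : 2 ≤ n) {k : ℕ} (hk : 1 ≤ k)
    (σ : Equiv.Perm (Fin (k + 1) → Fin n)) :
    Nat.card {τ : Equiv.Perm (Fin (k + 1) → Fin n) // ∀ i, fword τ i = fword σ i}
      = Nat.factorial n ^ n ^ k := by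
  let e2 : (Fin (k + 1) → Fin n) ≃ (Fin k → Fin n) × Fin n :=
    { toFun := fun w => (Fin.init w, w (Fin.last k))
      invFun := fun p => Fin.snoc p.1 p.2
      left_inv := fun w => Fin.snoc_init_self w
      right_inv := fun p => by simp [Fin.init_snoc, Fin.snoc_last] }
  have hcond : ∀ τ : Equiv.Perm (Fin (k + 1) → Fin n),
      (∀ i, fword τ i = fword σ i) ↔
        ∀ w : Fin (k + 1) → Fin n, Fin.init (τ.symm w) = Fin.init (σ.symm w) := by
    intro τ
    constructor
    · intro h w
      have := h (w 0)
      have := congrFun this (Fin.tail w)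
      simpa [fword, Fin.cons_self_tail] using this
    · intro h i
      funext α
      exact h (Fin.cons i α)
  let e1 : {τ : Equiv.Perm (Fin (k + 1) → Fin n) // ∀ i, fword τ i = fword σ i} ≃
      {π : Equiv.Perm (Fin (k + 1) → Fin n) // ∀ w, Fin.init (π w) = Fin.init w} :=
    { toFun := fun τ => ⟨σ.trans τ.1.symm, by
        intro w
        have := (hcond τ.1).mp τ.2 (σ w)
        simpa using this⟩
      invFun := fun π => ⟨π.1.symm.trans σ, by
        rw [hcond]
        intro w
        simpa using π.2 (σ.symm w)⟩
      left_inv := fun τ => Subtype.ext (Equiv.ext fun w => by simp)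
      right_inv := fun π => Subtype.ext (Equiv.ext fun w => by simp) }
  let e3 : {π : Equiv.Perm (Fin (k + 1) → Fin n) // ∀ w, Fin.init (π w) = Fin.init w} ≃
      {π : Equiv.Perm ((Fin k → Fin n) × Fin n) // ∀ p, (π p).1 = p.1} :=
    { toFun := fun π => ⟨(e2.symm.trans π.1).trans e2, fun p => by
        simpa [e2] using π.2 (e2.symm p)⟩
      invFun := fun π => ⟨(e2.trans π.1).trans e2.symm, fun w => by
        have := π.2 (e2 w)
        simpa [e2, Fin.init_snoc] using this⟩
      left_inv := fun π => Subtype.ext (Equiv.ext fun w => by simp)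
      right_inv := fun π => Subtype.ext (Equiv.ext fun p => by simp) }
  rw [Nat.card_congr ((e1.trans e3).trans fiberPerm)]
  simp [Nat.card_eq_fintype_card, Fintype.card_perm]
end

section
/- Identify each word a_1a_2a_3a_4 ∈ W_2^4 with the integer 1 + Σ_{j=1}^4 (a_j − 1)·2^{j−1} ∈ {1,…,16}. Let A, B, J, G be the permutations of W_2^4 given in cycle notation by A = (1,9)(2,4,10,12,14,16)(6,8), B = (1,9)(2,4,6,10,16,12,14), J = (10,12) (the transposition exchanging the words 2112 and 2212), and G = (9,13,15) (the 3-cycle sending 1112 ↦ 1122 ↦ 1222 ↦ 1112). Then each of A, B, J and G satisfies both the diagonal condition and the annihilation condition. -/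
/-- The diagonal condition: `⋃ m, Σ_m = X × X` for the family `f_i^σ`. -/
def diagCond {n k : ℕ} (σ : Equiv.Perm (Fin (k + 1) → Fin n)) : Prop :=
  (⋃ m, SigmaSet (fword σ) m) = Set.univ

/-- The set `𝒲`: off-diagonal pairs of words of length `k`, together with a point `†` (`none`). -/
def OffDiag (n k : ℕ) := Option {q : (Fin k → Fin n) × (Fin k → Fin n) // q.1 ≠ q.2}

/-- The map `f_{ij}^σ` on `𝒲`: it sends `(α,β)` to `(γ,δ)` if `σ(γm) = iα` and `σ(δm) = jβ`
for some letter `m`, and to `†` otherwise; `†` is fixed. -/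
def fpair {n k : ℕ} (σ : Equiv.Perm (Fin (k + 1) → Fin n)) (i j : Fin n) :
    OffDiag n k → OffDiag n k
  | none => none
  | some ⟨(α, β), _⟩ =>
      if h : (σ.symm (Fin.cons i α)) (Fin.last k) = (σ.symm (Fin.cons j β)) (Fin.last k) ∧
          Fin.init (σ.symm (Fin.cons i α)) ≠ Fin.init (σ.symm (Fin.cons j β)) then
        some ⟨(Fin.init (σ.symm (Fin.cons i α)), Fin.init (σ.symm (Fin.cons j β))), h.2⟩
      else none

/-- The sets `Ψ_m` associated to a family of maps `g_j : Y → Y` and a point `†`. -/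
def PsiSet {Y ι : Type*} (dag : Y) (g : ι → Y → Y) : ℕ → Set Y
  | 0 => {dag}
  | m + 1 => {dag} ∪ {y | ∀ j, g j y ∈ PsiSet dag g m}

/-- The annihilation condition: `⋃ m, Ψ_m = 𝒲` for the family `f_{ij}^σ`. -/
def annCond {n k : ℕ} (σ : Equiv.Perm (Fin (k + 1) → Fin n)) : Prop :=
  (⋃ m, PsiSet (none : OffDiag n k) (fun ij : Fin n × Fin n => fpair σ ij.1 ij.2) m) = Set.univ

/-- The identification of a word `a₁a₂a₃a₄ ∈ W₂⁴` (a letter being an element of `Fin 2`,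
so `a_j - 1` corresponds to `(w j : ℕ)`) with the integer `1 + Σ_j (a_j - 1)·2^(j-1)`. -/
def enc (w : Fin (3 + 1) → Fin 2) : ℕ := 1 + ∑ j : Fin 4, (w j : ℕ) * 2 ^ (j : ℕ)

/-- The cycle `(1,9)(2,4,10,12,14,16)(6,8)` on `{1,…,16}`. -/
def cycA : ℕ → ℕ := fun N =>
  if N = 1 then 9 else if N = 9 then 1
  else if N = 2 then 4 else if N = 4 then 10 else if N = 10 then 12
  else if N = 12 then 14 else if N = 14 then 16 else if N = 16 then 2
  else if N = 6 then 8 else if N = 8 then 6 else N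

/-- The cycle `(1,9)(2,4,6,10,16,12,14)` on `{1,…,16}`. -/
def cycB : ℕ → ℕ := fun N =>
  if N = 1 then 9 else if N = 9 then 1
  else if N = 2 then 4 else if N = 4 then 6 else if N = 6 then 10
  else if N = 10 then 16 else if N = 16 then 12 else if N = 12 then 14
  else if N = 14 then 2 else N

/-- The transposition `(10,12)` on `{1,…,16}` (exchanging the words `2112` and `2212`). -/
def cycJ : ℕ → ℕ := fun N =>
  if N = 10 then 12 else if N = 12 then 10 else N

/-- The 3-cycle `(9,13,15)` on `{1,…,16}` (sending `1112 ↦ 1122 ↦ 1222 ↦ 1112`). -/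
def cycG : ℕ → ℕ := fun N =>
  if N = 9 then 13 else if N = 13 then 15 else if N = 15 then 9 else N


/-! ### Auxiliary definitions and lemmas -/

/-- Decoding of the integer encoding `enc`. -/
def dec4 (N : ℕ) : Fin (3+1) → Fin 2 := fun j => ⟨(N-1)/2^(j:ℕ) % 2, by omega⟩

/-- Inverse of the cycle `cycA`. -/
def cycAi : ℕ → ℕ := fun N =>
  if N = 9 then 1 else if N = 1 then 9
  else if N = 4 then 2 else if N = 10 then 4 else if N = 12 then 10
  else if N = 14 then 12 else if N = 16 then 14 else if N = 2 then 16
  else if N = 8 then 6 else if N = 6 then 8 else N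

/-- Inverse of the cycle `cycB`. -/
def cycBi : ℕ → ℕ := fun N =>
  if N = 9 then 1 else if N = 1 then 9
  else if N = 4 then 2 else if N = 6 then 4 else if N = 10 then 6
  else if N = 16 then 10 else if N = 12 then 16 else if N = 14 then 12
  else if N = 2 then 14 else N

/-- Inverse of the cycle `cycG`. -/
def cycGi : ℕ → ℕ := fun N =>
  if N = 13 then 9 else if N = 15 then 13 else if N = 9 then 15 else N

def permA : Equiv.Perm (Fin (3+1) → Fin 2) :=
  ⟨fun w => dec4 (cycA (enc w)), fun w => dec4 (cycAi (enc w)), by decide, by decide⟩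
def permB : Equiv.Perm (Fin (3+1) → Fin 2) :=
  ⟨fun w => dec4 (cycB (enc w)), fun w => dec4 (cycBi (enc w)), by decide, by decide⟩
def permJ : Equiv.Perm (Fin (3+1) → Fin 2) :=
  ⟨fun w => dec4 (cycJ (enc w)), fun w => dec4 (cycJ (enc w)), by decide, by decide⟩
def permG : Equiv.Perm (Fin (3+1) → Fin 2) :=
  ⟨fun w => dec4 (cycG (enc w)), fun w => dec4 (cycGi (enc w)), by decide, by decide⟩

instance instDecEqOffDiag {n k : ℕ} : DecidableEq (OffDiag n k) :=
  inferInstanceAs (DecidableEq (Option {q : (Fin k → Fin n) × (Fin k → Fin n) // q.1 ≠ q.2}))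
instance instFintypeOffDiag {n k : ℕ} : Fintype (OffDiag n k) :=
  inferInstanceAs (Fintype (Option {q : (Fin k → Fin n) × (Fin k → Fin n) // q.1 ≠ q.2}))

instance instSig {X : Type*} [DecidableEq X] {n : ℕ} (f : Fin n → X → X) :
    ∀ (m : ℕ) (p : X × X), Decidable (p ∈ SigmaSet f m)
  | 0, p => decidable_of_iff (p.1 = p.2) Iff.rfl
  | m+1, p =>
      have := instSig f m
      decidable_of_iff (p ∈ SigmaSet f m ∨ ∀ i, (f i p.1, f i p.2) ∈ SigmaSet f m) Iff.rfl

instance instPsi {Y ι : Type*} [DecidableEq Y] [Fintype ι] (dag : Y) (g : ι → Y → Y) :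
    ∀ (m : ℕ) (y : Y), Decidable (y ∈ PsiSet dag g m)
  | 0, y => decidable_of_iff (y = dag) Iff.rfl
  | m+1, y =>
      have := instPsi dag g m
      decidable_of_iff (y = dag ∨ ∀ j, g j y ∈ PsiSet dag g m) Iff.rfl

lemma diag_of_stage {n k : ℕ} (σ : Equiv.Perm (Fin (k+1) → Fin n)) (M : ℕ)
    (h : ∀ p : (Fin k → Fin n) × (Fin k → Fin n), p ∈ SigmaSet (fword σ) M) :
    diagCond σ := by
  apply Set.eq_univ_of_forall
  exact fun p => Set.mem_iUnion.2 ⟨M, h p⟩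

lemma ann_of_stage {n k : ℕ} (σ : Equiv.Perm (Fin (k+1) → Fin n)) (M : ℕ)
    (h : ∀ y : OffDiag n k,
      y ∈ PsiSet (none : OffDiag n k) (fun ij : Fin n × Fin n => fpair σ ij.1 ij.2) M) :
    annCond σ := by
  apply Set.eq_univ_of_forall
  exact fun y => Set.mem_iUnion.2 ⟨M, h y⟩

set_option synthInstance.maxSize 2000
set_option maxHeartbeats 4000000
set_option maxRecDepth 4000000

lemma diagA : diagCond permA := diag_of_stage permA 4 (by decide)
lemma diagB : diagCond permB := diag_of_stage permB 4 (by decide)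
lemma diagJ : diagCond permJ := diag_of_stage permJ 5 (by decide)
lemma diagG : diagCond permG := diag_of_stage permG 6 (by decide)

lemma annA : annCond permA := ann_of_stage permA 5 (by
  letI : ∀ y : OffDiag 2 3, Decidable (y ∈ PsiSet none (fun ij : Fin 2 × Fin 2 => fpair permA ij.1 ij.2) 5) :=
    fun y => instPsi _ _ 5 y
  decide)
lemma annB : annCond permB := ann_of_stage permB 5 (by
  letI : ∀ y : OffDiag 2 3, Decidable (y ∈ PsiSet none (fun ij : Fin 2 × Fin 2 => fpair permB ij.1 ij.2) 5) :=
    fun y => instPsi _ _ 5 y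
  decide)
lemma annJ : annCond permJ := ann_of_stage permJ 4 (by
  letI : ∀ y : OffDiag 2 3, Decidable (y ∈ PsiSet none (fun ij : Fin 2 × Fin 2 => fpair permJ ij.1 ij.2) 4) :=
    fun y => instPsi _ _ 4 y
  decide)
lemma annG : annCond permG := ann_of_stage permG 6 (by
  letI : ∀ y : OffDiag 2 3, Decidable (y ∈ PsiSet none (fun ij : Fin 2 × Fin 2 => fpair permG ij.1 ij.2) 6) :=
    fun y => instPsi _ _ 6 y
  decide)

lemma enc_inj : ∀ w w' : Fin (3+1) → Fin 2, enc w = enc w' → w = w' := by decide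

lemma keyA : ∀ w, enc (permA w) = cycA (enc w) := by decide
lemma keyB : ∀ w, enc (permB w) = cycB (enc w) := by decide
lemma keyJ : ∀ w, enc (permJ w) = cycJ (enc w) := by decide
lemma keyG : ∀ w, enc (permG w) = cycG (enc w) := by decide

/-- Each of the permutations `A`, `B`, `J`, `G` of `W₂⁴` satisfies both the diagonal condition
and the annihilation condition. -/
theorem stmt_17 (σ : Equiv.Perm (Fin (3 + 1) → Fin 2))
    (hσ : (∀ w, enc (σ w) = cycA (enc w)) ∨ (∀ w, enc (σ w) = cycB (enc w)) ∨
          (∀ w, enc (σ w) = cycJ (enc w)) ∨ (∀ w, enc (σ w) = cycG (enc w))) :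
    diagCond σ ∧ annCond σ := by
  rcases hσ with h | h | h | h
  · have hA : σ = permA := Equiv.ext fun w => enc_inj _ _ ((h w).trans (keyA w).symm)
    subst hA; exact ⟨diagA, annA⟩
  · have hB : σ = permB := Equiv.ext fun w => enc_inj _ _ ((h w).trans (keyB w).symm)
    subst hB; exact ⟨diagB, annB⟩
  · have hJ : σ = permJ := Equiv.ext fun w => enc_inj _ _ ((h w).trans (keyJ w).symm)
    subst hJ; exact ⟨diagJ, annJ⟩
  · have hG : σ = permG := Equiv.ext fun w => enc_inj _ _ ((h w).trans (keyG w).symm)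
    subst hG; exact ⟨diagG, annG⟩
end
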